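/- For every graph G, ch(G) ≤ AT(G), i.e., if the graph polynomial P_G contains a monomial ∏ x_i^{t_i} with nonzero coefficient and t_i ≤ k−1 for all i, then G is k-choosable: for any assignment of lists L(v) ⊆ ℝ with |L(v)| ≥ k, G admits a proper coloring choosing each vertex's color from its list. -/

import Mathlib

open MvPolynomial Finset

/-- The graph polynomial `P_G = ∏_{(i,j) ∈ E, i < j} (xᵢ - xⱼ)`. -/
noncomputable def graphPoly {V : Type} [Fintype V] [LinearOrder V] (G : SimpleGraph V)
    [DecidableRel G.Adj] : MvPolynomial V ℝ :=
  ∏ p ∈ Finset.univ.filter (fun p : V × V => p.1 < p.2 ∧ G.Adj p.1 p.2), (X p.1 - X p.2)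

/-- `G` is Alon–Tarsi `k`-choosable: `P_G` has a monomial with non-zero coefficient all of whose
exponents are at most `k - 1`. -/
def IsAT {V : Type} [Fintype V] [LinearOrder V] (G : SimpleGraph V) [DecidableRel G.Adj]
    (k : ℕ) : Prop :=
  ∃ t : V →₀ ℕ, (graphPoly G).coeff t ≠ 0 ∧ ∀ i, t i + 1 ≤ k

/-- The Alon–Tarsi number of `G`: the least `k` such that `G` is Alon–Tarsi `k`-choosable. -/
noncomputable def ATnum {V : Type} [Fintype V] [LinearOrder V] (G : SimpleGraph V)
    [DecidableRel G.Adj] : ℕ :=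
  sInf {k | IsAT G k}

namespace ATproof

variable {n : ℕ}

/-- substitution of `C a` for `X i` -/
noncomputable def subst (i : Fin n) (a : ℝ) (p : MvPolynomial (Fin n) ℝ) :
    MvPolynomial (Fin n) ℝ :=
  aeval (Function.update X i (C a)) p

lemma exists_div (i : Fin n) (a : ℝ) (p : MvPolynomial (Fin n) ℝ) :
    ∃ q, p = (X i - C a) * q + subst i a p := by
  induction p using MvPolynomial.induction_on with
  | C c => exact ⟨0, by simp [subst]⟩
  | add p1 p2 h1 h2 =>
    obtain ⟨q1, e1⟩ := h1; obtain ⟨q2, e2⟩ := h2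
    refine ⟨q1 + q2, ?_⟩
    simp only [subst, map_add]
    rw [show p1 + p2 = ((X i - C a) * q1 + subst i a p1)
        + ((X i - C a) * q2 + subst i a p2) by rw [← e1, ← e2]]
    simp only [subst]; ring
  | mul_X p j h =>
    obtain ⟨q, e⟩ := h
    by_cases hj : j = i
    · subst hj
      refine ⟨q * X j + subst j a p, ?_⟩
      have hs : subst j a (p * X j) = subst j a p * C a := by
        simp [subst, map_mul]
      rw [hs]
      calc p * X j = ((X j - C a) * q + subst j a p) * X j := by rw [← e]
        _ = (X j - C a) * (q * X j + subst j a p) + subst j a p * C a := by ring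
    · refine ⟨q * X j, ?_⟩
      have hs : subst i a (p * X j) = subst i a p * X j := by
        simp [subst, map_mul, Function.update_of_ne hj]
      rw [hs]
      calc p * X j = ((X i - C a) * q + subst i a p) * X j := by rw [← e]
        _ = (X i - C a) * (q * X j) + subst i a p * X j := by ring

lemma coeff_subst_eq_zero (i : Fin n) (a : ℝ) (p : MvPolynomial (Fin n) ℝ) :
    ∀ t : Fin n →₀ ℕ, t i ≠ 0 → coeff t (subst i a p) = 0 := by
  induction p using MvPolynomial.induction_on with
  | C c =>
    intro t ht
    have htne : t ≠ 0 := fun h => ht (by simp [h])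
    simp only [subst, aeval_C, algebraMap_eq, coeff_C]
    exact if_neg (fun h => htne h.symm)
  | add p1 p2 h1 h2 =>
    intro t ht
    simp only [subst, map_add, coeff_add] at h1 h2 ⊢
    rw [h1 t ht, h2 t ht, add_zero]
  | mul_X p j h =>
    intro t ht
    by_cases hj : j = i
    · subst hj
      have hs : subst j a (p * X j) = subst j a p * C a := by simp [subst, map_mul]
      rw [hs, mul_comm, coeff_C_mul, h t ht, mul_zero]
    · have hs : subst i a (p * X j) = subst i a p * X j := by
        simp [subst, map_mul, Function.update_of_ne hj]
      rw [hs, coeff_mul_X']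
      split
      · apply h
        have : ((t - Finsupp.single j 1 : Fin n →₀ ℕ)) i = t i := by
          rw [Finsupp.tsub_apply, Finsupp.single_apply, if_neg hj, Nat.sub_zero]
        rw [this]; exact ht
      · rfl

lemma degree_eq_sum_univ (s : Fin n →₀ ℕ) : s.degree = ∑ j, s j :=
  Finset.sum_subset (Finset.subset_univ _) (fun j _ hj => Finsupp.notMem_support_iff.1 hj)

lemma degree_add_single (s : Fin n →₀ ℕ) (i : Fin n) :
    (s + Finsupp.single i 1 : Fin n →₀ ℕ).degree = s.degree + 1 := by
  simp only [degree_eq_sum_univ, Finsupp.add_apply, Finset.sum_add_distrib]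
  congr 1
  simp [Finsupp.single_apply]

lemma totalDegree_le_iff_coeff {q : MvPolynomial (Fin n) ℝ} {d : ℕ}
    (h : ∀ s : Fin n →₀ ℕ, d < s.degree → coeff s q = 0) : q.totalDegree ≤ d := by
  rw [totalDegree]
  refine Finset.sup_le fun m hm => ?_
  by_contra hlt
  push_neg at hlt
  have : coeff m q = 0 := h m (by
    unfold Finsupp.degree
    exact hlt)
  exact (MvPolynomial.mem_support_iff.1 hm) this

lemma totalDegree_subst_le (i : Fin n) (a : ℝ) (p : MvPolynomial (Fin n) ℝ) :
    (subst i a p).totalDegree ≤ p.totalDegree := by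
  rw [subst]
  conv_lhs => rw [p.as_sum, map_sum]
  refine (totalDegree_finset_sum _ _).trans (Finset.sup_le fun m hm => ?_)
  rw [aeval_monomial]
  refine (totalDegree_mul _ _).trans ?_
  rw [show (algebraMap ℝ (MvPolynomial (Fin n) ℝ) (coeff m p)).totalDegree = 0 from
    totalDegree_C _, zero_add]
  rw [Finsupp.prod]
  refine (totalDegree_finset_prod _ _).trans ?_
  calc ∑ j ∈ m.support, (Function.update X i (C a) j ^ m j).totalDegree
      ≤ ∑ j ∈ m.support, m j := by
        refine Finset.sum_le_sum (fun j _ => ?_)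
        refine (totalDegree_pow _ _).trans ?_
        rcases eq_or_ne j i with rfl | hj
        · simp [Function.update_self]
        · simp [Function.update_of_ne hj, totalDegree_X]
    _ ≤ p.totalDegree := le_totalDegree hm

lemma coeff_lin_mul (i : Fin n) (a : ℝ) (q : MvPolynomial (Fin n) ℝ)
    {t : Fin n →₀ ℕ} (ht : t i ≠ 0) :
    coeff t ((X i - C a) * q) = coeff (t - Finsupp.single i 1) q - a * coeff t q := by
  rw [sub_mul, coeff_sub, coeff_X_mul', coeff_C_mul, if_pos (Finsupp.mem_support_iff.2 ht)]

lemma coeff_q_high {i : Fin n} {a : ℝ} {p q : MvPolynomial (Fin n) ℝ}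
    (hpq : p = (X i - C a) * q + subst i a p) :
    ∀ (k : ℕ) (s : Fin n →₀ ℕ), p.totalDegree ≤ s.degree → q.totalDegree < s.degree + k →
      coeff s q = 0 := by
  intro k
  induction k with
  | zero =>
    intro s h1 h2
    exact coeff_eq_zero_of_totalDegree_lt (by exact h2)
  | succ k ih =>
    intro s h1 h2
    have hdu : (s + Finsupp.single i 1 : Fin n →₀ ℕ).degree = s.degree + 1 :=
      degree_add_single s i
    have hui : (s + Finsupp.single i 1 : Fin n →₀ ℕ) i ≠ 0 := by
      simp [Finsupp.add_apply, Finsupp.single_apply]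
    have h0 : coeff (s + Finsupp.single i 1) p = 0 := by
      apply coeff_eq_zero_of_totalDegree_lt
      rw [show ∑ j ∈ (s + Finsupp.single i 1 : Fin n →₀ ℕ).support,
        (s + Finsupp.single i 1 : Fin n →₀ ℕ) j
        = (s + Finsupp.single i 1 : Fin n →₀ ℕ).degree from rfl, hdu]
      omega
    have hr : coeff (s + Finsupp.single i 1) (subst i a p) = 0 :=
      coeff_subst_eq_zero i a p _ hui
    rw [hpq, coeff_add, coeff_lin_mul i a q hui, hr, add_zero,
      show (s + Finsupp.single i 1 - Finsupp.single i 1 : Fin n →₀ ℕ) = s by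
        ext j; simp [Finsupp.tsub_apply, Finsupp.add_apply]] at h0
    have key : coeff s q = a * coeff (s + Finsupp.single i 1) q := by linarith [h0]
    rw [key, ih (s + Finsupp.single i 1) (by omega) (by omega), mul_zero]

lemma aeval_subst (i : Fin n) (a : ℝ) (p : MvPolynomial (Fin n) ℝ) (x : Fin n → ℝ) :
    aeval x (subst i a p) = aeval (Function.update x i a) p := by
  rw [subst, comp_aeval_apply]
  have hfun : (fun j => aeval x (Function.update X i (C a) j)) = Function.update x i a := by
    funext j
    rcases eq_or_ne j i with rfl | hj
    · simp [Function.update_self]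
    · simp [Function.update_of_ne hj]
  rw [hfun]

lemma eq_C_of_totalDegree_eq_zero {p : MvPolynomial (Fin n) ℝ} (h : p.totalDegree = 0) :
    p = C (coeff 0 p) := by
  ext m
  rw [coeff_C]
  split
  · next hm => rw [← hm]
  · next hm =>
    by_contra hc
    have hmem : m ∈ p.support := MvPolynomial.mem_support_iff.2 hc
    have : m = 0 := by
      ext j
      exact (totalDegree_eq_zero_iff (Fin n) p).1 h m hmem j
    exact hm this.symm

lemma CN (N : ℕ) : ∀ (p : MvPolynomial (Fin n) ℝ) (t : Fin n →₀ ℕ) (S : Fin n → Finset ℝ),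
    t.degree ≤ N → coeff t p ≠ 0 → p.totalDegree ≤ t.degree →
    (∀ i, t i < (S i).card) →
    ∃ x : Fin n → ℝ, (∀ i, x i ∈ S i) ∧ aeval x p ≠ 0 := by
  induction N with
  | zero =>
    intro p t S hN h1 h3 h4
    have ht0 : t = 0 := (Finsupp.degree_eq_zero_iff t).1 (Nat.le_zero.1 hN)
    subst ht0
    have hdeg : p.totalDegree = 0 := Nat.le_zero.1 (by simpa using h3)
    have hne : ∀ i, (S i).Nonempty := fun i => Finset.card_pos.1 (by have := h4 i; omega)
    refine ⟨fun i => (hne i).choose, fun i => (hne i).choose_spec, ?_⟩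
    rw [eq_C_of_totalDegree_eq_zero hdeg]
    simpa using h1
  | succ N ih =>
    intro p t S hN h1 h3 h4
    by_cases h0 : t = 0
    · subst h0
      have hdeg : p.totalDegree = 0 := Nat.le_zero.1 (by simpa using h3)
      have hne : ∀ i, (S i).Nonempty := fun i => Finset.card_pos.1 (by have := h4 i; omega)
      refine ⟨fun i => (hne i).choose, fun i => (hne i).choose_spec, ?_⟩
      rw [eq_C_of_totalDegree_eq_zero hdeg]
      simpa using h1
    · obtain ⟨i, hti⟩ : ∃ i, t i ≠ 0 := by
        by_contra hc
        push_neg at hc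
        exact h0 (Finsupp.ext hc)
      obtain ⟨a, ha⟩ : (S i).Nonempty := Finset.card_pos.1 (by have := h4 i; omega)
      obtain ⟨q, hpq⟩ := exists_div i a p
      set t' : Fin n →₀ ℕ := t - Finsupp.single i 1 with ht'def
      have htt : t = t' + Finsupp.single i 1 := by
        ext j
        rcases eq_or_ne j i with rfl | hj
        · simp only [Finsupp.add_apply, ht'def, Finsupp.tsub_apply, Finsupp.single_eq_same]
          omega
        · simp only [Finsupp.add_apply, ht'def, Finsupp.tsub_apply,
            Finsupp.single_eq_of_ne' (Ne.symm hj)]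
          omega
      have hdeg' : t.degree = t'.degree + 1 := by
        conv_lhs => rw [htt]
        exact degree_add_single t' i
      have hq0 : ∀ s : Fin n →₀ ℕ, t.degree ≤ s.degree → coeff s q = 0 := fun s hs =>
        coeff_q_high hpq (q.totalDegree + 1) s (h3.trans hs) (by omega)
      have hqdeg : q.totalDegree ≤ t'.degree :=
        totalDegree_le_iff_coeff (fun s hs => hq0 s (by omega))
      have hcq : coeff t' q ≠ 0 := by
        have hcp : coeff t p = coeff t' q - a * coeff t q := by
          conv_lhs => rw [hpq]
          rw [coeff_add, coeff_subst_eq_zero i a p t hti, add_zero, coeff_lin_mul i a q hti]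
        rw [hq0 t le_rfl, mul_zero, sub_zero] at hcp
        rw [← hcp]
        exact h1
      set S' := Function.update S i ((S i).erase a) with hS'def
      have hcard : ∀ j, t' j < (S' j).card := by
        intro j
        rcases eq_or_ne j i with rfl | hj
        · have h1' : t' j = t j - 1 := by
            simp [ht'def, Finsupp.tsub_apply, Finsupp.single_apply]
          rw [h1', hS'def, Function.update_self, Finset.card_erase_of_mem ha]
          have := h4 j
          omega
        · have h1' : t' j = t j := by
            have hij : ¬ (i = j) := fun h => hj h.symm
            rw [ht'def, Finsupp.tsub_apply, Finsupp.single_apply, if_neg hij, Nat.sub_zero]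
          rw [h1', hS'def, Function.update_of_ne hj]
          exact h4 j
      obtain ⟨x, hx1, hx2⟩ := ih q t' S' (by omega) hcq hqdeg hcard
      by_cases hr : aeval (Function.update x i a) p = 0
      · refine ⟨x, ?_, ?_⟩
        · intro j
          rcases eq_or_ne j i with rfl | hj
          · have := hx1 j
            rw [hS'def, Function.update_self] at this
            exact Finset.mem_of_mem_erase this
          · have := hx1 j
            rwa [hS'def, Function.update_of_ne hj] at this
        · have hxia : x i ≠ a := by
            have := hx1 i
            rw [hS'def, Function.update_self] at this
            exact (Finset.mem_erase.1 this).1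
          conv_lhs => rw [hpq]
          rw [map_add, aeval_subst, hr, add_zero, map_mul, map_sub, aeval_X, aeval_C]
          simp only [Algebra.algebraMap_self_apply]
          exact mul_ne_zero (sub_ne_zero.2 hxia) hx2
      · refine ⟨Function.update x i a, ?_, hr⟩
        intro j
        rcases eq_or_ne j i with rfl | hj
        · rw [Function.update_self]; exact ha
        · rw [Function.update_of_ne hj]
          have := hx1 j
          rwa [hS'def, Function.update_of_ne hj] at this

end ATproof

theorem choosable_of_AT (n k : ℕ) (G : SimpleGraph (Fin n)) [DecidableRel G.Adj]
    (t : Fin n → ℕ)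
    (h1 : (graphPoly G).coeff (Finsupp.equivFunOnFinite.symm t) ≠ 0)
    (h2 : ∀ i, t i + 1 ≤ k)
    (L : Fin n → Finset ℝ) (hL : ∀ v, k ≤ (L v).card) :
    ∃ c : Fin n → ℝ, (∀ v, c v ∈ L v) ∧ ∀ u v, G.Adj u v → c u ≠ c v := by
  classical
  set E : Finset (Fin n × Fin n) :=
    Finset.univ.filter (fun p : Fin n × Fin n => p.1 < p.2 ∧ G.Adj p.1 p.2) with hE
  set tf : Fin n →₀ ℕ := Finsupp.equivFunOnFinite.symm t with htf
  have htfa : ∀ i, tf i = t i := fun i => rfl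
  have hom : (graphPoly G).IsHomogeneous E.card := by
    have h := MvPolynomial.IsHomogeneous.prod E (fun pr => (X pr.1 - X pr.2 : MvPolynomial (Fin n) ℝ))
      (fun _ => 1) (fun pr _ => ((isHomogeneous_X ℝ pr.1).sub (isHomogeneous_X ℝ pr.2)))
    have hsum : ∑ _pr ∈ E, 1 = E.card := by simp
    rw [hsum] at h
    exact h
  have hdeg_t : tf.degree = E.card := by
    by_contra hne
    exact h1 (hom.coeff_eq_zero hne)
  have h3 : (graphPoly G).totalDegree ≤ tf.degree := by
    rw [hdeg_t]; exact hom.totalDegree_le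
  have h4 : ∀ i, tf i < (L i).card := fun i => by
    rw [htfa i]
    have := h2 i
    have := hL i
    omega
  obtain ⟨x, hx, hev⟩ := ATproof.CN tf.degree (graphPoly G) tf L le_rfl h1 h3 h4
  have hev' : ∏ pr ∈ E, (x pr.1 - x pr.2) ≠ 0 := by
    have heq : aeval x (graphPoly G) = ∏ pr ∈ E, (x pr.1 - x pr.2) := by
      rw [graphPoly, map_prod]
      simp [hE]
    rwa [heq] at hev
  refine ⟨x, hx, ?_⟩
  intro u v huv hcuv
  rcases lt_trichotomy u v with h | h | h
  · refine hev' (Finset.prod_eq_zero (i := (u, v)) ?_ ?_)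
    · simp [hE, h, huv]
    · rw [hcuv]; exact sub_self _
  · exact (G.ne_of_adj huv) h
  · refine hev' (Finset.prod_eq_zero (i := (v, u)) ?_ ?_)
    · simp [hE, h, huv.symm]
    · rw [hcuv]; exact sub_self _
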